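/- arXiv:0807.5094 — 9 statements merged into one kernel-verified Lean document; each statement's English description precedes it below -/
import Mathlib

section
/- If T : M_{n,m}(F) → M_{n,m}(F) is a linear operator that strongly preserves gw-majorization, then T is invertible. -/
open Matrix

/-- R is g-row stochastic: Re = e. -/
def GRowStochastic {n : ℕ} {𝕜 : Type*} [RCLike 𝕜] (R : Matrix (Fin n) (Fin n) 𝕜) : Prop :=
  R *ᵥ (1 : Fin n → 𝕜) = 1

/-- gw-majorization on matrices: X ≻_gw Y iff Y = RX for some g-row stochastic R. -/
def GwMaj {n m : ℕ} {𝕜 : Type*} [RCLike 𝕜] (X Y : Matrix (Fin n) (Fin m) 𝕜) : Prop :=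
  ∃ R : Matrix (Fin n) (Fin n) 𝕜, GRowStochastic R ∧ Y = R * X

theorem stmt_0 {n m : ℕ} {𝕜 : Type*} [RCLike 𝕜]
    (T : Matrix (Fin n) (Fin m) 𝕜 →ₗ[𝕜] Matrix (Fin n) (Fin m) 𝕜)
    (hT : ∀ X Y, GwMaj X Y ↔ GwMaj (T X) (T Y)) :
    Function.Bijective T := by
  have hinj : Function.Injective T := by
    intro A B hAB
    have h0 : T (A - B) = 0 := by rw [map_sub, hAB, sub_self]
    have hmaj : GwMaj (T 0) (T (A - B)) :=
      ⟨1, by simp [GRowStochastic], by simp [h0, map_zero]⟩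
    obtain ⟨R, -, hEq⟩ := (hT 0 (A - B)).mpr hmaj
    have : A - B = 0 := by simpa using hEq
    exact sub_eq_zero.mp this
  exact ⟨hinj, LinearMap.injective_iff_surjective.mp hinj⟩
end

section
/- For x ∈ F^n, the following are equivalent: (1) x ≻_gw y for every y ∈ F^n; (2) x ∉ span{e}. -/
open Matrix

/-- gw-majorization on vectors. -/
def VGwMaj {n : ℕ} {𝕜 : Type*} [RCLike 𝕜] (x y : Fin n → 𝕜) : Prop :=
  ∃ R : Matrix (Fin n) (Fin n) 𝕜, GRowStochastic R ∧ y = R *ᵥ x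

theorem stmt_2 {n : ℕ} (hn : 2 ≤ n) {𝕜 : Type*} [RCLike 𝕜] (x : Fin n → 𝕜) :
    (∀ y : Fin n → 𝕜, VGwMaj x y) ↔ x ∉ Submodule.span 𝕜 {(1 : Fin n → 𝕜)} := by
  constructor
  · intro h hx
    rw [Submodule.mem_span_singleton] at hx
    obtain ⟨c, hc⟩ := hx
    have hpos : 0 < n := by omega
    obtain ⟨R, hR, hy⟩ := h (c • 1 + Pi.single (⟨0, hpos⟩ : Fin n) 1)
    have hx1 : R *ᵥ x = c • (1 : Fin n → 𝕜) := by
      rw [← hc, Matrix.mulVec_smul, hR]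
    rw [hx1] at hy
    have := congrFun hy ⟨0, hpos⟩
    simp at this
  · intro hx y
    rw [Submodule.mem_span_singleton] at hx
    push_neg at hx
    have hpos : 0 < n := by omega
    have hjk : ∃ j k : Fin n, x j ≠ x k := by
      by_contra hcon
      push_neg at hcon
      exact hx (x ⟨0, hpos⟩)
        (funext fun i => by simpa using hcon ⟨0, hpos⟩ i)
    obtain ⟨j, k, hjk⟩ := hjk
    have hjkne : j ≠ k := fun h => hjk (by rw [h])
    set d := x j - x k with hd
    have hdne : d ≠ 0 := sub_ne_zero.mpr hjk
    refine ⟨fun i l => (if l = j then (y i - x k)/d else 0)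
        + (if l = k then 1 - (y i - x k)/d else 0), ?_, ?_⟩
    · funext i
      simp [Matrix.mulVec, dotProduct, add_mul, Finset.sum_add_distrib,
        Finset.sum_ite_eq']
    · funext i
      simp [Matrix.mulVec, dotProduct, add_mul, Finset.sum_add_distrib,
        Finset.sum_ite_eq']
      field_simp
      ring
end

section
/- Let T : F^n → F^n be a nonzero linear operator. Then T preserves gw-majorization if and only if x ∉ span{e} implies T(x) ∉ span{e}. -/
open Matrix

lemma vgwmaj_of_nmem {n : ℕ} {𝕜 : Type*} [RCLike 𝕜] {x : Fin n → 𝕜}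
    (hx : x ∉ Submodule.span 𝕜 {(1 : Fin n → 𝕜)}) (y : Fin n → 𝕜) : VGwMaj x y := by
  obtain ⟨f, hfx, hf⟩ := Submodule.exists_dual_map_eq_bot_of_notMem hx inferInstance
  have hfe : f 1 = 0 := by
    have h1 : f 1 ∈ (Submodule.span 𝕜 {(1 : Fin n → 𝕜)}).map f :=
      ⟨1, Submodule.mem_span_singleton_self 1, rfl⟩
    rw [hf] at h1
    simpa using h1
  set L : (Fin n → 𝕜) →ₗ[𝕜] (Fin n → 𝕜) :=
    LinearMap.id + LinearMap.smulRight ((f x)⁻¹ • f) (y - x) with hL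
  have hmv : ∀ v, (LinearMap.toMatrix' L) *ᵥ v = L v := fun v => by
    rw [← Matrix.toLin'_apply, Matrix.toLin'_toMatrix']
  refine ⟨LinearMap.toMatrix' L, ?_, ?_⟩
  · show _ = _
    rw [hmv]
    simp [hL, hfe]
  · rw [hmv]
    simp [hL, smul_smul, inv_mul_cancel₀ hfx]

lemma vgwmaj_mem {n : ℕ} {𝕜 : Type*} [RCLike 𝕜] {x y : Fin n → 𝕜}
    (hx : x ∈ Submodule.span 𝕜 {(1 : Fin n → 𝕜)}) (h : VGwMaj x y) : y = x := by
  obtain ⟨c, rfl⟩ := Submodule.mem_span_singleton.mp hx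
  obtain ⟨R, hR, rfl⟩ := h
  rw [Matrix.mulVec_smul, hR]

theorem stmt_3 {n : ℕ} (hn : 2 ≤ n) {𝕜 : Type*} [RCLike 𝕜]
    (T : (Fin n → 𝕜) →ₗ[𝕜] (Fin n → 𝕜)) (hT : T ≠ 0) :
    (∀ x y, VGwMaj x y → VGwMaj (T x) (T y)) ↔
      (∀ x : Fin n → 𝕜, x ∉ Submodule.span 𝕜 {(1 : Fin n → 𝕜)} →
        T x ∉ Submodule.span 𝕜 {(1 : Fin n → 𝕜)}) := by
  constructor
  · intro hpres x hx hTx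
    have hconst : ∀ y, T y = T x := fun y =>
      vgwmaj_mem hTx (hpres x y (vgwmaj_of_nmem hx y))
    have h0 : T x = 0 := by
      have := hconst 0
      simpa using this.symm
    exact hT (LinearMap.ext fun y => by rw [hconst y, h0]; rfl)
  · intro h x y hxy
    by_cases hx : x ∈ Submodule.span 𝕜 {(1 : Fin n → 𝕜)}
    · rw [vgwmaj_mem hx hxy]
      exact ⟨1, Matrix.one_mulVec 1, (Matrix.one_mulVec _).symm⟩
    · exact vgwmaj_of_nmem (h x hx) (T y)
end

section
/- Let A ∈ M_n(F) with ker(A) = span{e}. Then there exist x₀, y₀ ∈ F^n and a g-row stochastic matrix R₀ such that x₀ + A y₀ does not gw-majorize R₀ x₀ + A R₀ y₀. -/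
open Matrix

theorem stmt_5 {n : ℕ} (hn : 2 ≤ n) {𝕜 : Type*} [RCLike 𝕜]
    (A : Matrix (Fin n) (Fin n) 𝕜)
    (hker : LinearMap.ker A.mulVecLin = Submodule.span 𝕜 {(1 : Fin n → 𝕜)}) :
    ∃ (x₀ y₀ : Fin n → 𝕜) (R₀ : Matrix (Fin n) (Fin n) 𝕜), GRowStochastic R₀ ∧
      ¬ VGwMaj (x₀ + A *ᵥ y₀) (R₀ *ᵥ x₀ + A *ᵥ (R₀ *ᵥ y₀)) := by
  by_contra hcon
  push_neg at hcon
  set i0 : Fin n := ⟨0, by omega⟩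
  set i1 : Fin n := ⟨1, by omega⟩
  have hi01 : i0 ≠ i1 := by simp [i0, i1, Fin.ext_iff]
  -- A *ᵥ 1 = 0
  have hA1 : A *ᵥ (1 : Fin n → 𝕜) = 0 := by
    have : (1 : Fin n → 𝕜) ∈ LinearMap.ker A.mulVecLin := by
      rw [hker]; exact Submodule.mem_span_singleton_self _
    simpa [Matrix.mulVecLin_apply] using this
  -- commuting property
  have key : ∀ (S : Matrix (Fin n) (Fin n) 𝕜), S *ᵥ (1 : Fin n → 𝕜) = 0 →
      ∀ y : Fin n → 𝕜, A *ᵥ (S *ᵥ y) = S *ᵥ (A *ᵥ y) := by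
    intro S hS y
    have hR : GRowStochastic (1 + S) := by
      unfold GRowStochastic
      rw [Matrix.add_mulVec, Matrix.one_mulVec, hS, add_zero]
    obtain ⟨R', hR', hs⟩ := hcon (-(A *ᵥ y)) y (1 + S) hR
    have ht : (-(A *ᵥ y)) + A *ᵥ y = 0 := by abel
    rw [ht, Matrix.mulVec_zero] at hs
    have hs' := hs
    rw [Matrix.add_mulVec, Matrix.one_mulVec, Matrix.add_mulVec, Matrix.one_mulVec,
      Matrix.mulVec_add, Matrix.mulVec_neg] at hs'
    ext i
    have h := congrFun hs' i
    simp only [Pi.add_apply, Pi.neg_apply, Pi.zero_apply] at h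
    linear_combination h
  -- off-diagonal entries vanish
  have hoff : ∀ p q : Fin n, q ≠ p → A q p = 0 := by
    intro p q hqp
    set w : Fin n → 𝕜 := Pi.single i0 1 - Pi.single i1 1 with hw
    set u : Fin n → 𝕜 := Pi.single p 1 with hu
    set S : Matrix (Fin n) (Fin n) 𝕜 := vecMulVec u w with hSdef
    have hSmul : ∀ v : Fin n → 𝕜, S *ᵥ v = (w ⬝ᵥ v) • u := by
      intro v
      ext i
      simp only [hSdef, Matrix.mulVec, Matrix.vecMulVec_apply, dotProduct, Pi.smul_apply,
        smul_eq_mul, Finset.mul_sum]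
      rw [Finset.sum_mul]
      exact Finset.sum_congr rfl fun j _ => by ring
    have hS1 : S *ᵥ (1 : Fin n → 𝕜) = 0 := by
      rw [hSmul]
      have : w ⬝ᵥ (1 : Fin n → 𝕜) = 0 := by
        simp [hw, dotProduct, Finset.sum_sub_distrib, Pi.sub_apply]
      rw [this, zero_smul]
    have hk := key S hS1 (Pi.single i0 1)
    rw [hSmul, hSmul] at hk
    have hwy : w ⬝ᵥ Pi.single i0 1 = 1 := by
      simp [hw, Pi.single_apply, hi01]
    rw [hwy, one_smul] at hk
    have hq := congrFun hk q
    simp only [Matrix.mulVec_single, Pi.smul_apply, smul_eq_mul, hu,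
      Pi.single_apply, if_neg hqp, mul_zero, mul_one] at hq
    simpa using hq
  -- diagonal entries vanish
  have hdiag : ∀ q : Fin n, A q q = 0 := by
    intro q
    have := congrFun hA1 q
    simp only [Matrix.mulVec, dotProduct, Pi.one_apply, mul_one, Pi.zero_apply] at this
    rw [show (∑ x, A q x) = A q q from
      Finset.sum_eq_single q (fun b _ hb => hoff b q (Ne.symm hb)) (by simp)] at this
    exact this
  have hA0 : A = 0 := by
    ext q p
    rcases eq_or_ne q p with h | h
    · subst h; exact hdiag q
    · exact hoff p q h
  -- contradiction: Pi.single i0 1 ∈ ker A = span{1}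
  have hmem : (Pi.single i0 1 : Fin n → 𝕜) ∈ Submodule.span 𝕜 {(1 : Fin n → 𝕜)} := by
    rw [← hker]
    simp [Matrix.mulVecLin_apply, hA0]
  obtain ⟨c, hc⟩ := Submodule.mem_span_singleton.mp hmem
  have h0 := congrFun hc i0
  have h1 := congrFun hc i1
  simp [Pi.single_apply, hi01.symm] at h0 h1
  rw [h1] at h0
  exact one_ne_zero h0.symm
end

section
/- Let A be an invertible g-row stochastic n×n matrix. Then A = I if and only if (x + Ay) ≻_gw (Rx + ARy) for all g-row stochastic R and all x, y ∈ F^n. -/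
open Matrix

lemma vecMulVec_mulVec' {n : ℕ} {𝕜 : Type*} [RCLike 𝕜] (u w x : Fin n → 𝕜) :
    (vecMulVec u w) *ᵥ x = (w ⬝ᵥ x) • u := by
  ext i
  simp [vecMulVec, mulVec, dotProduct, Finset.mul_sum, mul_comm, mul_left_comm]

theorem stmt_6 {n : ℕ} (hn : 2 ≤ n) {𝕜 : Type*} [RCLike 𝕜]
    (A : Matrix (Fin n) (Fin n) 𝕜) (hA : GRowStochastic A) (hAu : IsUnit A) :
    A = 1 ↔
      ∀ (R : Matrix (Fin n) (Fin n) 𝕜) (x y : Fin n → 𝕜), GRowStochastic R →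
        VGwMaj (x + A *ᵥ y) (R *ᵥ x + A *ᵥ (R *ᵥ y)) := by
  constructor
  · rintro rfl R x y hR
    exact ⟨R, hR, by simp [mulVec_add]⟩
  · intro H
    set i0 : Fin n := ⟨0, by omega⟩ with hi0
    set i1 : Fin n := ⟨1, by omega⟩ with hi1
    have h01 : i0 ≠ i1 := by
      simp [hi0, hi1, Fin.ext_iff]
    -- key commutation: A (R y) = R (A y) for all g-row stochastic R
    have key : ∀ R : Matrix (Fin n) (Fin n) 𝕜, GRowStochastic R →
        ∀ y, A *ᵥ (R *ᵥ y) = R *ᵥ (A *ᵥ y) := by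
      intro R hR y
      obtain ⟨S, hS, hz⟩ := H R (-(A *ᵥ y)) y hR
      rw [neg_add_cancel, mulVec_zero, mulVec_neg] at hz
      exact (neg_add_eq_zero.mp hz).symm
    set w : Fin n → 𝕜 := Pi.single i0 1 - Pi.single i1 1 with hw
    have hwe : w ⬝ᵥ (1 : Fin n → 𝕜) = 0 := by
      simp [hw, sub_dotProduct, dotProduct, Pi.single_apply]
    set c : 𝕜 := w ⬝ᵥ (A *ᵥ Pi.single i0 1) with hcdef
    have hdiag : ∀ i p : Fin n, A i p = c * (if i = p then 1 else 0) := by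
      intro i p
      set u : Fin n → 𝕜 := Pi.single p 1 with hu
      set R : Matrix (Fin n) (Fin n) 𝕜 := 1 + vecMulVec u w with hRdef
      have hRmv : ∀ v, R *ᵥ v = v + (w ⬝ᵥ v) • u := by
        intro v
        rw [hRdef, add_mulVec, one_mulVec, vecMulVec_mulVec']
      have hR : GRowStochastic R := by
        unfold GRowStochastic
        rw [hRmv, hwe, zero_smul, add_zero]
      have hc := key R hR (Pi.single i0 1)
      rw [hRmv, hRmv] at hc
      have hwy : w ⬝ᵥ (Pi.single i0 1 : Fin n → 𝕜) = 1 := by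
        simp [hw, sub_dotProduct, single_dotProduct, Pi.single_apply, h01.symm]
      rw [hwy, one_smul, mulVec_add, ← hcdef] at hc
      have hc' : A *ᵥ u = c • u := add_left_cancel hc
      have hAcol : (A *ᵥ (Pi.single p 1 : Fin n → 𝕜)) i = A i p := by
        rw [mulVec_single]; simp
      have h := congrFun hc' i
      rw [hAcol] at h
      rw [h, hu]
      simp [Pi.single_apply, Pi.smul_apply, smul_eq_mul]
    have hrow : (A *ᵥ (1 : Fin n → 𝕜)) i0 = 1 := by rw [hA]; rfl
    have hc1 : c = 1 := by
      rw [show (A *ᵥ (1 : Fin n → 𝕜)) i0 = ∑ j, A i0 j from by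
        simp [mulVec, dotProduct]] at hrow
      calc c = ∑ j, c * (if i0 = j then 1 else 0) := by
              simp [mul_ite, mul_one, mul_zero, Finset.sum_ite_eq]
        _ = ∑ j, A i0 j := Finset.sum_congr rfl fun j _ => (hdiag i0 j).symm
        _ = 1 := hrow
    ext i p
    rw [hdiag i p, hc1, one_mul, Matrix.one_apply]
end

section
/- If an invertible matrix A ∈ M_n(F) satisfies AR = RA for every g-row stochastic matrix R ∈ M_n(F), then A is a scalar multiple of the identity; if moreover A is itself g-row stochastic, then A = I. -/
open Matrix

theorem stmt_7 {n : ℕ} (hn : 2 ≤ n) {𝕜 : Type*} [RCLike 𝕜]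
    (A : Matrix (Fin n) (Fin n) 𝕜) (hAu : IsUnit A)
    (hcomm : ∀ R : Matrix (Fin n) (Fin n) 𝕜, GRowStochastic R → A * R = R * A) :
    (∃ c : 𝕜, A = c • (1 : Matrix (Fin n) (Fin n) 𝕜)) ∧
      (GRowStochastic A → A = 1) := by
  set j0 : Fin n := ⟨0, by omega⟩ with hj0
  set j1 : Fin n := ⟨1, by omega⟩ with hj1
  have hstd : ∀ (i a : Fin n), (Matrix.single i a (1:𝕜)) *ᵥ (1 : Fin n → 𝕜)
      = fun p => if p = i then 1 else 0 := by
    intro i a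
    funext p
    simp [mulVec, dotProduct, Matrix.single, ite_and, Finset.sum_ite_eq, eq_comm]
  have key : ∀ i : Fin n,
      A * Matrix.single i j0 (1:𝕜) - A * Matrix.single i j1 1
        = Matrix.single i j0 (1:𝕜) * A - Matrix.single i j1 1 * A := by
    intro i
    have hR : GRowStochastic
        ((1 : Matrix (Fin n) (Fin n) 𝕜) + (Matrix.single i j0 1 - Matrix.single i j1 1)) := by
      unfold GRowStochastic
      rw [add_mulVec, sub_mulVec, hstd, hstd, one_mulVec]
      funext p; simp
    have h := hcomm _ hR
    rw [mul_add, add_mul, mul_one, one_mul, mul_sub, sub_mul] at h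
    exact add_left_cancel h
  have hj01 : j0 ≠ j1 := by simp [hj0, hj1, Fin.ext_iff]
  set c : 𝕜 := A j0 j0 - A j1 j0 with hc
  have entry : ∀ p i : Fin n, A p i = if p = i then c else 0 := by
    intro p i
    have h := congrFun (congrFun (key i) p) j0
    simp only [Matrix.sub_apply] at h
    rcases eq_or_ne p i with rfl | hpi
    · rw [Matrix.mul_single_apply_same,
        Matrix.mul_single_apply_of_ne _ _ _ _ _ hj01,
        Matrix.single_mul_apply_same,
        Matrix.single_mul_apply_same] at h
      simpa [hc] using h
    · rw [Matrix.mul_single_apply_same,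
        Matrix.mul_single_apply_of_ne _ _ _ _ _ hj01,
        Matrix.single_mul_apply_of_ne _ _ _ _ _ hpi,
        Matrix.single_mul_apply_of_ne _ _ _ _ _ hpi] at h
      simpa [hpi] using h
  have hA : A = c • (1 : Matrix (Fin n) (Fin n) 𝕜) := by
    ext p i
    rw [entry p i]
    by_cases h : p = i <;> simp [h, Matrix.one_apply]
  refine ⟨⟨c, hA⟩, fun hgs => ?_⟩
  have h0 : (A *ᵥ (1 : Fin n → 𝕜)) j0 = 1 := by rw [hgs]; rfl
  rw [hA] at h0 ⊢
  have hc1 : c = 1 := by simpa [smul_mulVec, one_mulVec] using h0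
  rw [hc1, one_smul]
end

section
/- Let x, y ∈ F^n with x having two distinct components x_k ≠ x_l. Then there exists a g-row stochastic matrix R with Rx = y; explicitly, R with entries r_{ik} = (y_i − x_l)/(x_k − x_l), r_{il} = (x_k − y_i)/(x_k − x_l), and r_{ij} = 0 otherwise, satisfies Re = e and Rx = y. -/
open Matrix

theorem stmt_8 {n : ℕ} (hn : 2 ≤ n) {𝕜 : Type*} [RCLike 𝕜]
    (x y : Fin n → 𝕜) (k l : Fin n) (hkl : x k ≠ x l) :
    GRowStochastic (Matrix.of fun i j =>
        if j = k then (y i - x l) / (x k - x l)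
        else if j = l then (x k - y i) / (x k - x l) else (0 : 𝕜)) ∧
      (Matrix.of fun i j =>
        if j = k then (y i - x l) / (x k - x l)
        else if j = l then (x k - y i) / (x k - x l) else (0 : 𝕜)) *ᵥ x = y := by
  have hk : k ≠ l := fun h => hkl (by rw [h])
  have hd : x k - x l ≠ 0 := sub_ne_zero.mpr hkl
  have key : ∀ (v : Fin n → 𝕜) (i : Fin n),
      (∑ j, (if j = k then (y i - x l) / (x k - x l)
        else if j = l then (x k - y i) / (x k - x l) else (0 : 𝕜)) * v j)
      = (y i - x l) / (x k - x l) * v k + (x k - y i) / (x k - x l) * v l := by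
    intro v i
    rw [Finset.sum_eq_add_of_mem k l (Finset.mem_univ _) (Finset.mem_univ _) hk]
    · simp [hk.symm]
    · intro j _ hj
      simp [hj.1, hj.2]
  constructor
  · funext i
    simp only [mulVec, dotProduct, of_apply, Pi.one_apply]
    rw [key (fun _ => 1) i]
    field_simp
    ring
  · funext i
    simp only [mulVec, dotProduct, of_apply]
    rw [key x i]
    field_simp
    ring
end

section
/- Let X, Y ∈ M_{n,m}(F), let A, B ∈ M_n(F) be invertible g-row stochastic matrices, C ∈ M_m(F) invertible, and α, β ∈ F with α ≠ 0. Then X ≻_gw Y if and only if AX ≻_gw BY. -/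
open Matrix

lemma GRowStochastic.mul {n : ℕ} {𝕜 : Type*} [RCLike 𝕜]
    {P Q : Matrix (Fin n) (Fin n) 𝕜} (hP : GRowStochastic P) (hQ : GRowStochastic Q) :
    GRowStochastic (P * Q) := by
  unfold GRowStochastic at *
  rw [← mulVec_mulVec, hQ, hP]

lemma GRowStochastic.inv {n : ℕ} {𝕜 : Type*} [RCLike 𝕜]
    {P : Matrix (Fin n) (Fin n) 𝕜} (hP : GRowStochastic P) (hPu : IsUnit P) :
    GRowStochastic P⁻¹ := by
  unfold GRowStochastic at *
  conv_lhs => rw [← hP]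
  rw [mulVec_mulVec, nonsing_inv_mul _ (isUnit_iff_isUnit_det P |>.mp hPu), one_mulVec]

theorem stmt_9 {n m : ℕ} {𝕜 : Type*} [RCLike 𝕜]
    (X Y : Matrix (Fin n) (Fin m) 𝕜)
    (A B : Matrix (Fin n) (Fin n) 𝕜)
    (hA : GRowStochastic A) (hAu : IsUnit A)
    (hB : GRowStochastic B) (hBu : IsUnit B)
    (C : Matrix (Fin m) (Fin m) 𝕜) (hCu : IsUnit C)
    (α β : 𝕜) (hα : α ≠ 0) :
    GwMaj X Y ↔ GwMaj (A * X) (B * Y) := by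
  have hAd := (isUnit_iff_isUnit_det A).mp hAu
  have hBd := (isUnit_iff_isUnit_det B).mp hBu
  constructor
  · rintro ⟨R, hR, rfl⟩
    refine ⟨B * R * A⁻¹, (hB.mul hR).mul (hA.inv hAu), ?_⟩
    rw [Matrix.mul_assoc (B * R), ← Matrix.mul_assoc A⁻¹,
      nonsing_inv_mul _ hAd, Matrix.one_mul, Matrix.mul_assoc]
  · rintro ⟨R, hR, hY⟩
    refine ⟨B⁻¹ * R * A, ((hB.inv hBu).mul hR).mul hA, ?_⟩
    have : B⁻¹ * (B * Y) = B⁻¹ * (R * (A * X)) := by rw [hY]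
    rw [← Matrix.mul_assoc, nonsing_inv_mul _ hBd, Matrix.one_mul] at this
    rw [this, Matrix.mul_assoc, Matrix.mul_assoc]
end

section
/- A linear operator T : M_{n,m}(F) → M_{n,m}(F) strongly preserves gw-majorization if and only if there exist an invertible g-row stochastic matrix A ∈ M_n(F) and an invertible matrix B ∈ M_m(F) such that T(X) = AXB for all X. -/
open Matrix

section Aux
variable {n m : ℕ} {𝕜 : Type*} [RCLike 𝕜]

lemma grs_one : GRowStochastic (1 : Matrix (Fin n) (Fin n) 𝕜) := by
  simp [GRowStochastic]

lemma grs_mul {R S : Matrix (Fin n) (Fin n) 𝕜} (hR : GRowStochastic R) (hS : GRowStochastic S) :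
    GRowStochastic (R * S) := by
  unfold GRowStochastic at *
  rw [← Matrix.mulVec_mulVec, hS, hR]

lemma grs_rowsum {R : Matrix (Fin n) (Fin n) 𝕜} (hR : GRowStochastic R) (i : Fin n) :
    ∑ k, R i k = 1 := by
  have := congrFun hR i
  simpa [Matrix.mulVec, dotProduct] using this

lemma grs_inv {A : Matrix (Fin n) (Fin n) 𝕜} (hA : GRowStochastic A) (hU : IsUnit A) :
    GRowStochastic A⁻¹ := by
  unfold GRowStochastic at *
  calc A⁻¹ *ᵥ 1 = A⁻¹ *ᵥ (A *ᵥ 1) := by rw [hA]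
    _ = (A⁻¹ * A) *ᵥ 1 := by rw [Matrix.mulVec_mulVec]
    _ = 1 := by
        rw [Matrix.nonsing_inv_mul _ ((Matrix.isUnit_iff_isUnit_det A).mp hU)]
        simp

lemma gwmaj_mulright {X Y : Matrix (Fin n) (Fin m) 𝕜} (M : Matrix (Fin m) (Fin m) 𝕜)
    (hM : IsUnit M) : GwMaj (X * M) (Y * M) ↔ GwMaj X Y := by
  have hd := (Matrix.isUnit_iff_isUnit_det M).mp hM
  constructor
  · rintro ⟨R, hR, h⟩
    refine ⟨R, hR, ?_⟩
    have := congrArg (· * M⁻¹) h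
    simp only [Matrix.mul_assoc, Matrix.mul_nonsing_inv _ hd, Matrix.mul_one] at this
    exact this
  · rintro ⟨R, hR, h⟩
    exact ⟨R, hR, by rw [h, Matrix.mul_assoc]⟩

/-- matrix all of whose rows are `c` -/
def rowRep (c : Fin m → 𝕜) : Matrix (Fin n) (Fin m) 𝕜 := Matrix.of fun _ j => c j

/-- matrix whose row `p` is `c` and other rows are zero -/
def srow (p : Fin n) (c : Fin m → 𝕜) : Matrix (Fin n) (Fin m) 𝕜 :=
  Matrix.of fun i j => if i = p then c j else 0

/-- the g-row stochastic matrix that repeats row `i0` -/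
def reprow (i0 : Fin n) : Matrix (Fin n) (Fin n) 𝕜 :=
  Matrix.of fun _ k => if k = i0 then 1 else 0

lemma grs_reprow (i0 : Fin n) : GRowStochastic (reprow (𝕜 := 𝕜) i0) := by
  funext i
  simp [GRowStochastic, reprow, Matrix.mulVec, dotProduct]

lemma reprow_mul (i0 : Fin n) (X : Matrix (Fin n) (Fin m) 𝕜) :
    reprow i0 * X = rowRep (X i0) := by
  ext i j
  show ∑ k, reprow i0 i k * X k j = _
  simp [reprow, rowRep, Matrix.mul_apply, ite_mul]

lemma gwmaj_rowRep_self (X : Matrix (Fin n) (Fin m) 𝕜) (i0 : Fin n) :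
    GwMaj X (rowRep (X i0)) :=
  ⟨reprow i0, grs_reprow i0, (reprow_mul i0 X).symm⟩

lemma rowRep_eq_zero {c : Fin m → 𝕜} (i0 : Fin n) (h : rowRep (n := n) c = 0) : c = 0 :=
  funext fun j => congrFun (congrFun h i0) j

lemma scalar_of_prop (hm : 0 < m) (g : (Fin m → 𝕜) → (Fin m → 𝕜))
    (hadd : ∀ c d, g (c + d) = g c + g d)
    (hsmul : ∀ (t : 𝕜) c, g (t • c) = t • g c)
    (h : ∀ c, ∃ t : 𝕜, g c = t • c) :
    ∃ a : 𝕜, ∀ c, g c = a • c := by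
  set j0 : Fin m := ⟨0, hm⟩
  set δ : Fin m → 𝕜 := Pi.single j0 1 with hδ
  have hδ0 : δ ≠ 0 := fun h0 => by simpa [δ] using congrFun h0 j0
  obtain ⟨a, ha⟩ := h δ
  refine ⟨a, fun c => ?_⟩
  by_cases hc : ∃ u : 𝕜, c = u • δ
  · obtain ⟨u, rfl⟩ := hc
    rw [hsmul, ha, smul_comm]
  · obtain ⟨t, ht⟩ := h c
    obtain ⟨s, hs⟩ := h (c + δ)
    have key : (t - s) • c = (s - a) • δ := by
      have h1 : g c + g δ = s • c + s • δ := by rw [← hadd, hs, smul_add]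
      rw [ht, ha] at h1
      rw [sub_smul, sub_smul, sub_eq_sub_iff_add_eq_add]
      exact h1.trans (add_comm _ _)
    have hts : t = s := by
      by_contra hne
      exact hc ⟨(t - s)⁻¹ * (s - a), by
        rw [mul_smul, ← key, smul_smul, inv_mul_cancel₀ (sub_ne_zero.mpr hne),
          one_smul]⟩
    have hsa : s = a := by
      rw [hts, sub_self, zero_smul] at key
      rcases smul_eq_zero.mp key.symm with h0 | h0
      · exact sub_eq_zero.mp h0
      · exact absurd h0 hδ0
    rw [ht, hts, hsa]

lemma easy_dir {A : Matrix (Fin n) (Fin n) 𝕜} {B : Matrix (Fin m) (Fin m) 𝕜}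
    (T : Matrix (Fin n) (Fin m) 𝕜 →ₗ[𝕜] Matrix (Fin n) (Fin m) 𝕜)
    (hA : GRowStochastic A) (hUA : IsUnit A) (hUB : IsUnit B)
    (hT : ∀ X, T X = A * X * B) (X Y : Matrix (Fin n) (Fin m) 𝕜) :
    GwMaj X Y ↔ GwMaj (T X) (T Y) := by
  have hdA := (Matrix.isUnit_iff_isUnit_det A).mp hUA
  have hdB := (Matrix.isUnit_iff_isUnit_det B).mp hUB
  rw [hT, hT]
  constructor
  · rintro ⟨R, hR, rfl⟩
    refine ⟨A * R * A⁻¹, grs_mul (grs_mul hA hR) (grs_inv hA hUA), ?_⟩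
    simp only [Matrix.mul_assoc, Matrix.nonsing_inv_mul_cancel_left _ _ hdA]
  · rintro ⟨R, hR, h⟩
    refine ⟨A⁻¹ * R * A, grs_mul (grs_mul (grs_inv hA hUA) hR) hA, ?_⟩
    have h2 := congrArg (fun Z => A⁻¹ * Z * B⁻¹) h
    simp only [Matrix.mul_assoc, Matrix.mul_nonsing_inv _ hdB, Matrix.mul_one,
      Matrix.nonsing_inv_mul_cancel_left _ _ hdA] at h2
    simpa [Matrix.mul_assoc] using h2

end Aux

theorem stmt_12 {n m : ℕ} (hn : 2 ≤ n) {𝕜 : Type*} [RCLike 𝕜]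
    (T : Matrix (Fin n) (Fin m) 𝕜 →ₗ[𝕜] Matrix (Fin n) (Fin m) 𝕜) :
    (∀ X Y, GwMaj X Y ↔ GwMaj (T X) (T Y)) ↔
      ∃ (A : Matrix (Fin n) (Fin n) 𝕜) (B : Matrix (Fin m) (Fin m) 𝕜),
        GRowStochastic A ∧ IsUnit A ∧ IsUnit B ∧ ∀ X, T X = A * X * B := by
  constructor
  · intro hpr
    have i0 : Fin n := ⟨0, by omega⟩
    rcases Nat.eq_zero_or_pos m with hm | hm
    · subst hm
      refine ⟨1, 1, grs_one, isUnit_one, isUnit_one, fun X => ?_⟩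
      ext i j; exact j.elim0
    set j0 : Fin m := ⟨0, hm⟩ with hj0
    -- injectivity and surjectivity
    have hinj : Function.Injective T := by
      rw [injective_iff_map_eq_zero]
      intro D hD
      have h0 : GwMaj (T 0) (T D) := by
        rw [map_zero, hD]; exact ⟨1, grs_one, by simp⟩
      obtain ⟨R, _, hR⟩ := (hpr 0 D).mpr h0
      simpa using hR
    have hsurj : Function.Surjective T := LinearMap.injective_iff_surjective.mp hinj
    -- T maps constant-row matrices to constant-row matrices
    have hψ : ∀ c : Fin m → 𝕜, T (rowRep c) = rowRep (T (rowRep c) i0) := by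
      intro c
      obtain ⟨Z, hZ⟩ := hsurj (reprow i0 * T (rowRep c))
      have h1 : GwMaj (T (rowRep c)) (T Z) := by
        rw [hZ]; exact ⟨reprow i0, grs_reprow i0, rfl⟩
      obtain ⟨R, hRg, hR⟩ := (hpr (rowRep c) Z).mpr h1
      have hZc : Z = rowRep c := by
        rw [hR]; ext i j
        simp [rowRep, Matrix.mul_apply, ← Finset.sum_mul, grs_rowsum hRg]
      calc T (rowRep c) = T Z := by rw [hZc]
        _ = rowRep (T (rowRep c) i0) := by rw [hZ, reprow_mul]
    -- decomposition of rowRep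
    have hrsum : ∀ c : Fin m → 𝕜, T (rowRep (n := n) c) i0
        = ∑ j, c j • (T (rowRep (Pi.single j 1)) i0) := by
      intro c
      have h0 : rowRep (n := n) c = ∑ j, c j • rowRep (Pi.single j 1) := by
        ext i k
        simp [rowRep, Matrix.sum_apply, Pi.single_apply, mul_ite, Finset.sum_ite_eq]
      rw [h0, map_sum]
      funext k
      simp [Matrix.sum_apply, Finset.sum_apply]
    set B : Matrix (Fin m) (Fin m) 𝕜 :=
      Matrix.of (fun j k => T (rowRep (Pi.single j 1)) i0 k) with hBdef
    have hrowB : ∀ c : Fin m → 𝕜, rowRep (n := n) c * B = rowRep (T (rowRep c) i0) := by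
      intro c
      ext i k
      have hrfl : rowRep (n := n) (T (rowRep c) i0) i k = T (rowRep c) i0 k := rfl
      rw [Matrix.mul_apply, hrfl, hrsum c, Finset.sum_apply]
      simp [rowRep, hBdef]
    have hUB : IsUnit B := by
      rw [Matrix.isUnit_iff_isUnit_det, isUnit_iff_ne_zero]
      intro hdet
      obtain ⟨v, hv0, hvB⟩ := (Matrix.exists_vecMul_eq_zero_iff).mpr hdet
      apply hv0
      have h1 : rowRep (n := n) v * B = 0 := by
        ext i k
        have := congrFun hvB k
        simpa [Matrix.vecMul, dotProduct, Matrix.mul_apply, rowRep] using this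
      have h2 : rowRep (n := n) (T (rowRep v) i0) = 0 := by rw [← hrowB]; exact h1
      have h3 : T (rowRep (n := n) v) = 0 := by rw [hψ v, h2]
      have h4 : rowRep (n := n) v = 0 := hinj (by rw [h3, map_zero])
      exact rowRep_eq_zero i0 h4
    have hdB := (Matrix.isUnit_iff_isUnit_det B).mp hUB
    -- key equivalence
    have hstar : ∀ (X : Matrix (Fin n) (Fin m) 𝕜) (c : Fin m → 𝕜),
        GwMaj X (rowRep c) ↔ GwMaj (T X * B⁻¹) (rowRep c) := by
      intro X c
      calc GwMaj X (rowRep c) ↔ GwMaj (T X) (rowRep (T (rowRep c) i0)) := by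
            rw [hpr X (rowRep c), hψ c]
            rfl
        _ ↔ GwMaj (T X * B⁻¹ * B) (rowRep c * B) := by
            rw [Matrix.nonsing_inv_mul_cancel_right _ _ hdB, hrowB]
        _ ↔ GwMaj (T X * B⁻¹) (rowRep c) := gwmaj_mulright B hUB
    -- every row of T X * B⁻¹ is an affine combination of the rows of X
    have haff : ∀ (X : Matrix (Fin n) (Fin m) 𝕜) (i : Fin n), ∃ r : Fin n → 𝕜,
        (∑ k, r k = 1) ∧ ∀ j, (T X * B⁻¹) i j = ∑ k, r k * X k j := by
      intro X i
      have h1 : GwMaj (T X * B⁻¹) (rowRep ((T X * B⁻¹) i)) := gwmaj_rowRep_self _ i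
      obtain ⟨R, hRg, hR⟩ := (hstar X ((T X * B⁻¹) i)).mpr h1
      refine ⟨R i0, grs_rowsum hRg i0, fun j => ?_⟩
      have := congrFun (congrFun hR i0) j
      simpa [rowRep, Matrix.mul_apply] using this
    -- scalar coefficients
    have hcoef : ∀ (i p : Fin n), ∃ a : 𝕜, ∀ c, (T (srow p c) * B⁻¹) i = a • c := by
      intro i p
      apply scalar_of_prop hm
      · intro c d
        have hs : srow p (c + d) = srow p c + srow p d := by
          ext i' j; by_cases h : i' = p <;> simp [srow, h]
        rw [hs, map_add, Matrix.add_mul]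
        rfl
      · intro t c
        have hs : srow p (t • c) = t • srow p c := by
          ext i' j; by_cases h : i' = p <;> simp [srow, h]
        rw [hs, _root_.map_smul, Matrix.smul_mul]
        rfl
      · intro c
        obtain ⟨r, hr1, hr⟩ := haff (srow p c) i
        refine ⟨r p, funext fun j => ?_⟩
        rw [hr j]
        simp [srow, mul_ite, Finset.sum_ite_eq']
    choose a ha using hcoef
    set A : Matrix (Fin n) (Fin n) 𝕜 := Matrix.of a with hAdef
    have hTA : ∀ X : Matrix (Fin n) (Fin m) 𝕜, T X * B⁻¹ = A * X := by
      intro X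
      have hX : X = ∑ p, srow p (X p) := by
        ext i j
        simp [srow, Matrix.sum_apply, Finset.sum_ite_eq]
      ext i j
      calc (T X * B⁻¹) i j = ((∑ p, T (srow p (X p)) * B⁻¹)) i j := by
            conv_lhs => rw [hX]
            rw [map_sum, Matrix.sum_mul]
        _ = ∑ p, (T (srow p (X p)) * B⁻¹) i j := by rw [Matrix.sum_apply]
        _ = ∑ p, a i p * X p j := by
            refine Finset.sum_congr rfl fun p _ => ?_
            have := congrFun (ha i p (X p)) j
            simpa using this
        _ = (A * X) i j := by simp [Matrix.mul_apply, hAdef]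
    have hGRS : GRowStochastic A := by
      funext i
      obtain ⟨r, hr1, hr⟩ := haff (rowRep ((Pi.single j0 1 : Fin m → 𝕜))) i
      have h1 : (T (rowRep (Pi.single j0 (1:𝕜))) * B⁻¹) i j0 = 1 := by
        rw [hr j0]
        simp [rowRep, ← Finset.sum_mul, hr1]
      rw [hTA] at h1
      have h2 : ∑ p, A i p = 1 := by
        simpa [Matrix.mul_apply, rowRep] using h1
      simp [Matrix.mulVec, dotProduct, h2]
    have hUA : IsUnit A := by
      rw [Matrix.isUnit_iff_isUnit_det, isUnit_iff_ne_zero]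
      intro hdet
      obtain ⟨v, hv0, hvA⟩ := (Matrix.exists_mulVec_eq_zero_iff).mpr hdet
      apply hv0
      set X : Matrix (Fin n) (Fin m) 𝕜 := Matrix.of fun p j => v p * (Pi.single j0 1 : Fin m → 𝕜) j
        with hXdef
      have hAX : A * X = 0 := by
        ext i j
        have := congrFun hvA i
        simp only [Matrix.mulVec, dotProduct] at this
        simp [hXdef, Matrix.mul_apply, ← mul_assoc, ← Finset.sum_mul, this]
      have hTX : T X = 0 := by
        have h5 : T X * B⁻¹ = 0 := by rw [hTA, hAX]
        have h6 : T X = T X * B⁻¹ * B := (Matrix.nonsing_inv_mul_cancel_right _ _ hdB).symm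
        rw [h6, h5, Matrix.zero_mul]
      have h7 : X = 0 := hinj (by rw [hTX, map_zero])
      funext p
      have := congrFun (congrFun h7 p) j0
      simpa [hXdef] using this
    refine ⟨A, B, hGRS, hUA, hUB, fun X => ?_⟩
    rw [← hTA X] at *
    exact (Matrix.nonsing_inv_mul_cancel_right _ _ hdB).symm
  · rintro ⟨A, B, hA, hUA, hUB, hT⟩
    exact easy_dir T hA hUA hUB hT
end
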